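/- Let $u^1, \dots, u^m \in \mathbb{R}^n$ be vectors (the gradients $Du^\alpha$), let $K > 0$, and suppose $|u^1|^2 \cdot \sum_{\alpha=2}^m |u^\alpha|^2 \le K^2$ and $\sum_{\alpha=2}^m |u^\alpha|^2 \le K$. Let $\lambda_1 \ge \lambda_2 \ge \cdots \ge \lambda_n \ge 0$ be the singular values of the $n \times m$ matrix whose columns are $u^1, \dots, u^m$. Then $\lambda_i \lambda_j \le 2K$ for all $i \ne j$. -/
import Mathlib

open Matrix Finset

theorem trace_eigs (n : ℕ) (A : Matrix (Fin n) (Fin n) ℝ) (hA : A.IsHermitian) :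
    A.trace = ∑ i, hA.eigenvalues i ∧ (A*A).trace = ∑ i, hA.eigenvalues i ^ 2 := by
  have hU := (Matrix.mem_unitaryGroup_iff').mp (hA.eigenvectorUnitary).2
  set U : Matrix (Fin n) (Fin n) ℝ := (hA.eigenvectorUnitary : Matrix (Fin n) (Fin n) ℝ)
  set D : Matrix (Fin n) (Fin n) ℝ := Matrix.diagonal (RCLike.ofReal ∘ hA.eigenvalues)
  have hspec : A = U * D * star U := hA.spectral_theorem
  constructor
  · rw [congrArg Matrix.trace hspec, Matrix.trace_mul_cycle]
    simp [hU, D, Matrix.trace_diagonal]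
  · have h2 : (U * D * star U) * (U * D * star U) = U * (D * D) * star U := by
      simp only [Matrix.mul_assoc]
      rw [← Matrix.mul_assoc (star U) U, hU, Matrix.one_mul]
    rw [congrArg Matrix.trace (congrArg₂ HMul.hMul hspec hspec), h2, Matrix.trace_mul_cycle]
    simp [hU, D, Matrix.diagonal_mul_diagonal, Matrix.trace_diagonal, sq]

theorem trace_vmv (n : ℕ) (x y : Fin n → ℝ) :
    (Matrix.vecMulVec x x * Matrix.vecMulVec y y).trace = (∑ i, x i * y i) ^ 2 := by
  simp only [Matrix.trace, Matrix.diag, Matrix.mul_apply, Matrix.vecMulVec_apply, sq,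
    Finset.sum_mul_sum]
  rw [Finset.sum_comm]
  congr 1; ext i; congr 1; ext k; ring

theorem stmt_4 (n m : ℕ) (hn : 2 ≤ n) (hm : 1 ≤ m) (K : ℝ) (hK : 0 < K)
    (u : Fin m → Fin n → ℝ)
    (h1 : (∑ i, u ⟨0, hm⟩ i ^ 2) *
        (∑ α ∈ Finset.univ.filter (fun α => α ≠ (⟨0, hm⟩ : Fin m)), ∑ i, u α i ^ 2) ≤ K ^ 2)
    (h2 : (∑ α ∈ Finset.univ.filter (fun α => α ≠ (⟨0, hm⟩ : Fin m)), ∑ i, u α i ^ 2) ≤ K)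
    (A : Matrix (Fin n) (Fin n) ℝ)
    (hAdef : A = ∑ α, Matrix.vecMulVec (u α) (u α))
    (hA : A.IsHermitian)
    (lam : Fin n → ℝ) (hlamnn : ∀ i, 0 ≤ lam i)
    (hmono : ∀ i j : Fin n, i ≤ j → lam j ≤ lam i)
    (heig : ∃ σ : Equiv.Perm (Fin n), ∀ i, hA.eigenvalues (σ i) = lam i ^ 2) :
    ∀ i j : Fin n, i ≠ j → lam i * lam j ≤ 2 * K := by
  obtain ⟨σ, hσ⟩ := heig
  set μ := hA.eigenvalues with hμ
  set z : Fin m := ⟨0, hm⟩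
  set a0 : ℝ := ∑ i, u z i ^ 2 with ha0
  set S : ℝ := ∑ α ∈ Finset.univ.filter (fun α => α ≠ z), ∑ i, u α i ^ 2 with hS
  -- nonnegativity
  have hμnn : ∀ p, 0 ≤ μ p := by
    intro p
    have := hσ (σ.symm p)
    rw [Equiv.apply_symm_apply] at this
    rw [this]; positivity
  have ha0nn : (0:ℝ) ≤ a0 := by positivity
  have hSnn : (0:ℝ) ≤ S := by
    apply Finset.sum_nonneg; intro α _; positivity
  -- trace facts
  obtain ⟨hT, hQ⟩ := trace_eigs n A hA
  -- trace A = a0 + S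
  have htrA : A.trace = a0 + S := by
    rw [hAdef, Matrix.trace_sum]
    have : ∀ α, (Matrix.vecMulVec (u α) (u α)).trace = ∑ i, u α i ^ 2 := by
      intro α
      simp [Matrix.trace, Matrix.diag, Matrix.vecMulVec_apply, sq]
    simp only [this]
    rw [ha0, hS, Finset.filter_ne', ← Finset.add_sum_erase _ _ (Finset.mem_univ z)]
  -- trace (A*A) ≥ a0^2
  have htrAA : a0 ^ 2 ≤ (A*A).trace := by
    rw [hAdef, Finset.sum_mul_sum]
    rw [Matrix.trace_sum]
    simp only [Matrix.trace_sum, trace_vmv]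
    calc a0 ^ 2 = (∑ i, u z i * u z i) ^ 2 := by rw [ha0]; congr 1; exact Finset.sum_congr rfl (fun i _ => (sq (u z i)).symm) ▸ rfl
    _ ≤ ∑ β, (∑ i, u z i * u β i) ^ 2 := by
        apply Finset.single_le_sum (f := fun β => (∑ i, u z i * u β i) ^ 2)
          (fun β _ => sq_nonneg _) (Finset.mem_univ z)
    _ ≤ ∑ α, ∑ β, (∑ i, u α i * u β i) ^ 2 := by
        apply Finset.single_le_sum (f := fun α => ∑ β, (∑ i, u α i * u β i) ^ 2)
          (fun α _ => Finset.sum_nonneg fun β _ => sq_nonneg _) (Finset.mem_univ z)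
  intro i j hij
  set a := σ i
  set b := σ j
  have hab : a ≠ b := fun h => hij (σ.injective h)
  -- splitting sums
  have hsub : ({a, b} : Finset (Fin n)) ⊆ Finset.univ := Finset.subset_univ _
  have hsplit : ∀ f : Fin n → ℝ, ∑ p, f p = f a + f b + ∑ p ∈ Finset.univ \ {a, b}, f p := by
    intro f
    rw [← Finset.sum_sdiff hsub, Finset.sum_pair hab]
    ring
  set R : ℝ := ∑ p ∈ Finset.univ \ {a, b}, μ p with hR
  have hRnn : 0 ≤ R := Finset.sum_nonneg fun p _ => hμnn p
  have hQ' : ∑ p ∈ Finset.univ \ {a, b}, μ p ^ 2 ≤ R ^ 2 := by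
    rw [hR, sq]
    rw [Finset.sum_mul]
    apply Finset.sum_le_sum
    intro p hp
    rw [sq]
    exact mul_le_mul_of_nonneg_left
      (Finset.single_le_sum (fun q _ => hμnn q) hp) (hμnn p) |>.trans
      (le_of_eq rfl)
  have hTsplit := hsplit μ
  have hQsplit := hsplit (fun p => μ p ^ 2)
  -- key inequality
  have key : 2 * (μ a * μ b) ≤ (∑ p, μ p) ^ 2 - ∑ p, μ p ^ 2 := by
    rw [hTsplit, hQsplit]
    nlinarith [hμnn a, hμnn b, mul_nonneg (hμnn a) hRnn, mul_nonneg (hμnn b) hRnn]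
  have hTval : (∑ p, μ p) = a0 + S := by rw [← hT, htrA]
  have hQval : a0 ^ 2 ≤ ∑ p, μ p ^ 2 := by rw [← hQ]; exact htrAA
  have hfin : μ a * μ b ≤ (2*K)^2 := by
    rw [hTval] at key
    nlinarith [sq_nonneg K, hK.le]
  have hsq : (lam i * lam j)^2 ≤ (2*K)^2 := by
    calc (lam i * lam j)^2 = lam i ^2 * lam j ^2 := by ring
    _ = μ a * μ b := by rw [hσ i, hσ j]
    _ ≤ (2*K)^2 := hfin
  nlinarith [hsq, mul_nonneg (hlamnn i) (hlamnn j), hK]
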